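/- Let x, y, λ, μ be real numbers with x² > |λ| > 1, |μ| > y² and y > 0, x > 0, and let θ be real with sin θ ≠ 0. Let A = diag(λ, 1/λ) ∈ SL(2,ℝ) and consider the 4×4 block matrix ψ = diag(x⁻¹ A, x R_θ). Then the eigenvalues of ψ of maximal modulus are x e^{iθ} and x e^{-iθ}, which are non-real; hence ψ is not semiproximal. -/

import Mathlib

open Matrix Polynomial

lemma my_charpoly_fin_two (M : Matrix (Fin 2) (Fin 2) ℂ) :
    M.charpoly = X ^ 2 - C (M 0 0 + M 1 1) * X + C (M 0 0 * M 1 1 - M 0 1 * M 1 0) := by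
  rw [Matrix.charpoly, Matrix.det_fin_two, charmatrix_apply_eq, charmatrix_apply_eq,
    charmatrix_apply_ne _ _ _ (by decide), charmatrix_apply_ne _ _ _ (by decide)]
  simp only [C_add, C_mul, C_sub]; ring

lemma my_roots_quad (a b : ℂ) : ((X - C a) * (X - C b)).roots = {a, b} := by
  rw [roots_mul (by apply mul_ne_zero <;> exact X_sub_C_ne_zero _), roots_X_sub_C, roots_X_sub_C]
  rfl


/-- The multiset of complex eigenvalues (with algebraic multiplicity) of a real matrix. -/
noncomputable def specC {n : Type*} [Fintype n] [DecidableEq n]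
    (A : Matrix n n ℝ) : Multiset ℂ :=
  ((A.map (algebraMap ℝ ℂ)).charpoly).roots

/-- The moduli of the eigenvalues of `A`, sorted in decreasing order. -/
noncomputable def ellList {n : Type*} [Fintype n] [DecidableEq n]
    (A : Matrix n n ℝ) : List ℝ :=
  ((specC A).map (fun z : ℂ => ‖z‖)).sort (· ≥ ·)

/-- `ell A i` is `ℓ_i(A)`, the `i`-th largest modulus of an eigenvalue of `A` (1-based). -/
noncomputable def ell {n : Type*} [Fintype n] [DecidableEq n]
    (A : Matrix n n ℝ) (i : ℕ) : ℝ :=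
  (ellList A).getD (i - 1) 0

/-- The singular values of `g`, i.e. the square roots of the eigenvalues of `g * gᴴ`,
sorted in decreasing order. -/
noncomputable def svalList {n : Type*} [Fintype n] [DecidableEq n]
    (g : Matrix n n ℝ) : List ℝ :=
  (Finset.univ.val.map fun i =>
    Real.sqrt ((Matrix.isHermitian_mul_conjTranspose_self g).eigenvalues i)).sort (· ≥ ·)

/-- `sval g i` is `σ_i(g)`, the `i`-th largest singular value of `g` (1-based). -/
noncomputable def sval {n : Type*} [Fintype n] [DecidableEq n]
    (g : Matrix n n ℝ) (i : ℕ) : ℝ :=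
  (svalList g).getD (i - 1) 0

/-- The multiset of eigenvalues of the `i`-th exterior power `∧^i A`: products of the
eigenvalues of `A` over `i`-element sub-multisets. -/
noncomputable def wedgeSpec {n : Type*} [Fintype n] [DecidableEq n]
    (i : ℕ) (A : Matrix n n ℝ) : Multiset ℂ :=
  ((specC A).powersetCard i).map Multiset.prod


/-- with `x² > |λ| > 1`, `|μ| > y²`, `x, y > 0`, `sin θ ≠ 0`, the eigenvalues of
maximal modulus of `ψ = diag(x⁻¹·diag(λ,1/λ), x·R_θ)` are exactly the non-real numbers
`xe^{±iθ}`; hence `ψ` is not semiproximal. -/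
theorem stmt_18 (x y lam mu θ : ℝ) (h1 : x ^ 2 > |lam|) (h2 : |lam| > 1) (h3 : |mu| > y ^ 2)
    (hy : 0 < y) (hx : 0 < x) (hθ : Real.sin θ ≠ 0) :
    let A : Matrix (Fin 2) (Fin 2) ℝ := Matrix.diagonal ![lam, lam⁻¹]
    let Rθ : Matrix (Fin 2) (Fin 2) ℝ :=
      !![Real.cos θ, -Real.sin θ; Real.sin θ, Real.cos θ]
    let ψ : Matrix (Fin 2 ⊕ Fin 2) (Fin 2 ⊕ Fin 2) ℝ :=
      Matrix.fromBlocks (x⁻¹ • A) 0 0 (x • Rθ)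
    let v : ℂ := (x : ℝ) * Complex.exp (θ * Complex.I)
    v ∈ specC ψ ∧ (starRingEnd ℂ) v ∈ specC ψ ∧
    (∀ z ∈ specC ψ, ‖z‖ ≤ x) ∧
    (∀ z ∈ specC ψ, ‖z‖ = x → z = v ∨ z = (starRingEnd ℂ) v) ∧
    v.im ≠ 0 ∧
    ¬ (ψ.charpoly).IsRoot x ∧ ¬ (ψ.charpoly).IsRoot (-x) := by
  intro A Rθ ψ v
  have hx0 : (x : ℂ) ≠ 0 := by exact_mod_cast hx.ne'
  have hlam0 : lam ≠ 0 := fun h => by rw [h, abs_zero] at h2; linarith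
  -- v explicitly
  have hv : v = (↑(x * Real.cos θ) : ℂ) + ↑(x * Real.sin θ) * Complex.I := by
    simp only [v, Complex.exp_mul_I]
    push_cast [← Complex.ofReal_cos, ← Complex.ofReal_sin]
    ring
  have hcv : (starRingEnd ℂ) v = ↑(x * Real.cos θ) - ↑(x * Real.sin θ) * Complex.I := by
    rw [hv]; simp [Complex.ext_iff]
  set a : ℂ := (lam : ℂ) / x with ha
  set b : ℂ := ((lam : ℂ) * x)⁻¹ with hb
  -- the mapped matrix
  have hmap : ψ.map (algebraMap ℝ ℂ) =
      Matrix.fromBlocks !![a, 0; 0, b] 0 0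
        !![(x * Real.cos θ : ℝ), (-(x * Real.sin θ) : ℝ); (x * Real.sin θ : ℝ), (x * Real.cos θ : ℝ)] := by
    ext (i | i) (j | j) <;> fin_cases i <;> fin_cases j <;>
      simp [ψ, A, Rθ, Matrix.diagonal, ha, hb, div_eq_mul_inv, mul_inv, mul_comm]
  -- charpoly factorization
  have hcp : (ψ.map (algebraMap ℝ ℂ)).charpoly =
      ((X - C a) * (X - C b)) * ((X - C v) * (X - C ((starRingEnd ℂ) v))) := by
    rw [hmap, Matrix.charpoly_fromBlocks_zero₁₂, my_charpoly_fin_two, my_charpoly_fin_two]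
    have h1' : ((x : ℂ) * Complex.cos ↑θ + ↑x * Complex.cos ↑θ : ℂ) = v + (starRingEnd ℂ) v := by
      rw [hcv, hv]; push_cast; ring
    have h2' : ((x : ℂ) * Complex.cos ↑θ * (↑x * Complex.cos ↑θ) +
        ↑x * Complex.sin ↑θ * (↑x * Complex.sin ↑θ) : ℂ) = v * (starRingEnd ℂ) v := by
      rw [hcv, hv]; push_cast
      linear_combination ((x : ℂ) * Complex.sin ↑θ) ^ 2 * Complex.I_sq
    norm_num [Matrix.cons_val_zero, Matrix.cons_val_one]
    simp only [← C_mul, ← C_add]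
    rw [h1', h2']
    simp only [C_add, C_mul]
    ring
  have hspec : specC ψ = {a, b, v, (starRingEnd ℂ) v} := by
    rw [specC, hcp, roots_mul, my_roots_quad, my_roots_quad]
    · rfl
    · apply mul_ne_zero <;> apply mul_ne_zero <;> exact X_sub_C_ne_zero _
  -- basic numeric facts
  have hxgt1 : 1 < x := by nlinarith
  have habs_v : ‖v‖ = x := by
    rw [norm_mul, Complex.norm_real, Real.norm_eq_abs, Complex.norm_exp_ofReal_mul_I, mul_one, abs_of_pos hx]
  have habs_cv : ‖(starRingEnd ℂ) v‖ = x := by rw [Complex.norm_conj, habs_v]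
  have haa : ‖a‖ = |lam| / x := by
    rw [ha, norm_div, Complex.norm_real, Complex.norm_real, Real.norm_eq_abs, Real.norm_eq_abs, abs_of_pos hx]
  have haa_lt : |lam| / x < x := by rw [div_lt_iff₀ hx]; nlinarith
  have hbb : ‖b‖ = (|lam| * x)⁻¹ := by
    rw [hb, norm_inv, norm_mul, Complex.norm_real, Complex.norm_real, Real.norm_eq_abs, Real.norm_eq_abs, abs_of_pos hx]
  have hbb_lt : (|lam| * x)⁻¹ < x := by
    have h1' : (1:ℝ) < |lam| * x := by nlinarith
    calc (|lam| * x)⁻¹ < 1 := by rw [inv_lt_one_iff₀]; right; exact h1'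
    _ < x := hxgt1
  have hsin : x * Real.sin θ ≠ 0 := mul_ne_zero hx.ne' hθ
  have him_v : v.im = x * Real.sin θ := by
    rw [hv]; simp only [Complex.add_im, Complex.ofReal_im, Complex.mul_im, Complex.ofReal_re,
      Complex.I_im, Complex.I_re]; ring
  have him_cv : ((starRingEnd ℂ) v).im = -(x * Real.sin θ) := by
    rw [hcv]; simp only [Complex.sub_im, Complex.ofReal_im, Complex.mul_im, Complex.ofReal_re,
      Complex.I_im, Complex.I_re]; ring
  have hmem : ∀ z ∈ specC ψ, z = a ∨ z = b ∨ z = v ∨ z = (starRingEnd ℂ) v := by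
    intro z hz
    rw [hspec] at hz
    simpa using hz
  have habsle : ∀ z ∈ specC ψ, ‖z‖ ≤ x := by
    intro z hz
    rcases hmem z hz with rfl | rfl | rfl | rfl
    · rw [haa]; linarith
    · rw [hbb]; linarith
    · rw [habs_v]
    · rw [habs_cv]
  have hmax : ∀ z ∈ specC ψ, ‖z‖ = x → z = v ∨ z = (starRingEnd ℂ) v := by
    intro z hz hze
    rcases hmem z hz with rfl | rfl | rfl | rfl
    · rw [haa] at hze; linarith
    · rw [hbb] at hze; linarith
    · left; rfl
    · right; rfl
  have hkey : ∀ r : ℝ, (ψ.charpoly).IsRoot r → (r : ℂ) ∈ specC ψ := by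
    intro r hr
    rw [specC, Matrix.charpoly_map, mem_roots ((ψ.charpoly_monic.map (algebraMap ℝ ℂ)).ne_zero)]
    exact hr.map
  have hnoreal : ∀ r : ℝ, |r| = x → ¬ (ψ.charpoly).IsRoot r := by
    intro r hre hr
    have hmem' := hkey r hr
    have habs : ‖(r : ℂ)‖ = x := by rw [Complex.norm_real, Real.norm_eq_abs, hre]
    rcases hmax _ hmem' habs with h | h
    · have := congrArg Complex.im h
      rw [Complex.ofReal_im, him_v] at this
      exact hsin this.symm
    · have := congrArg Complex.im h
      rw [Complex.ofReal_im, him_cv] at this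
      exact hsin (neg_eq_zero.mp this.symm)
  refine ⟨?_, ?_, habsle, hmax, ?_, ?_, ?_⟩
  · rw [hspec]; simp
  · rw [hspec]; simp
  · rw [him_v]; exact hsin
  · exact hnoreal x (abs_of_pos hx)
  · exact hnoreal (-x) (by rw [abs_neg]; exact abs_of_pos hx)
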